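/- Let Ω be a completely regular Hausdorff space and Y a sublattice of C(Ω). Then the closure of Y (in the compact-open topology) equals the set of all f in C(Ω) such that for every finite subset F of Ω there exists g in Y agreeing with f on F. -/

import Mathlib

open Set Filter Topology Uniformity

/-- Lattice approximation lemma: on a compact space, if `L` is a sublattice of `C(X, ℝ)`
and `f` agrees with some element of `L` at every pair of points, then `f` can be
approximated uniformly by elements of `L`. -/
lemma lattice_approx {X : Type*} [TopologicalSpace X] [CompactSpace X]
    (L : Set C(X, ℝ)) (nA : L.Nonempty)
    (inf_mem : ∀ f ∈ L, ∀ g ∈ L, f ⊓ g ∈ L)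
    (sup_mem : ∀ f ∈ L, ∀ g ∈ L, f ⊔ g ∈ L)
    (f : C(X, ℝ)) (sep : ∀ x y : X, ∃ g ∈ L, g x = f x ∧ g y = f y)
    {ε : ℝ} (pos : 0 < ε) : ∃ g ∈ L, dist f g < ε := by
  by_cases nX : Nonempty X
  swap
  · exact ⟨nA.some, nA.choose_spec,
      (ContinuousMap.dist_lt_iff pos).mpr fun x => False.elim (nX ⟨x⟩)⟩
  choose g hg w₁ w₂ using sep
  let U : X → X → Set X := fun x y => {z | f z - ε < g x y z}
  have U_nhd_y : ∀ x y, U x y ∈ 𝓝 y := by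
    intro x y
    refine IsOpen.mem_nhds ?_ ?_
    · apply isOpen_lt <;> continuity
    · rw [Set.mem_setOf_eq, w₂]
      exact sub_lt_self _ pos
  let ys : X → Finset X := fun x => (CompactSpace.elim_nhds_subcover (U x) (U_nhd_y x)).choose
  let ys_w : ∀ x, ⋃ y ∈ ys x, U x y = ⊤ := fun x =>
    (CompactSpace.elim_nhds_subcover (U x) (U_nhd_y x)).choose_spec
  have ys_nonempty : ∀ x, (ys x).Nonempty := fun x =>
    Set.nonempty_of_union_eq_top_of_nonempty _ _ nX (ys_w x)
  let h : X → L := fun x =>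
    ⟨(ys x).sup' (ys_nonempty x) fun y => (g x y : C(X, ℝ)),
      Finset.sup'_mem _ sup_mem _ _ _ fun y _ => hg x y⟩
  have lt_h : ∀ x z, f z - ε < (h x : X → ℝ) z := by
    intro x z
    obtain ⟨y, ym, zm⟩ := Set.exists_set_mem_of_union_eq_top _ _ (ys_w x) z
    dsimp [h]
    simp only [ContinuousMap.coe_sup', Finset.sup'_apply, Finset.lt_sup'_iff]
    exact ⟨y, ym, zm⟩
  have h_eq : ∀ x, (h x : X → ℝ) x = f x := by intro x; simp [h, w₁]
  let W : X → Set X := fun x => {z | (h x : X → ℝ) z < f z + ε}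
  have W_nhd : ∀ x, W x ∈ 𝓝 x := by
    intro x
    refine IsOpen.mem_nhds ?_ ?_
    · apply isOpen_lt <;> fun_prop
    · dsimp only [W, Set.mem_setOf_eq]
      rw [Set.mem_setOf_eq, h_eq]
      exact lt_add_of_pos_right _ pos
  let xs : Finset X := (CompactSpace.elim_nhds_subcover W W_nhd).choose
  let xs_w : ⋃ x ∈ xs, W x = ⊤ := (CompactSpace.elim_nhds_subcover W W_nhd).choose_spec
  have xs_nonempty : xs.Nonempty := Set.nonempty_of_union_eq_top_of_nonempty _ _ nX xs_w
  let k : C(X, ℝ) := xs.inf' xs_nonempty fun x => (h x : C(X, ℝ))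
  have kmem : k ∈ L := Finset.inf'_mem _ inf_mem _ _ _ fun x _ => (h x).2
  refine ⟨k, kmem, ?_⟩
  rw [ContinuousMap.dist_lt_iff pos]
  intro z
  rw [Real.dist_eq, abs_sub_lt_iff]
  have hkz : k z = xs.inf' xs_nonempty fun x => (h x : X → ℝ) z := by
    simp [k, ContinuousMap.inf'_apply]
  constructor
  · have h1 : f z - ε < k z := by
      rw [hkz, Finset.lt_inf'_iff]
      exact fun x _ => lt_h x z
    linarith
  · obtain ⟨x, hx, hzx⟩ := Set.exists_set_mem_of_union_eq_top _ _ xs_w z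
    have hk : k z ≤ (h x : X → ℝ) z := by
      rw [hkz]; exact Finset.inf'_le _ hx
    have h2 : (h x : X → ℝ) z < f z + ε := hzx
    linarith

set_option synthInstance.maxHeartbeats 1000000 in
/-- The closure (compact-open topology) of a sublattice `Y` of `C(Ω)` is the set of all
`f` that agree with some element of `Y` on every finite set of points. -/
theorem stmt2 {Ω : Type*} [TopologicalSpace Ω] [T2Space Ω] [CompletelyRegularSpace Ω]
    (Y : Submodule ℝ C(Ω, ℝ)) (hlat : ∀ f ∈ Y, ∀ g ∈ Y, f ⊔ g ∈ Y) :
    closure (Y : Set C(Ω, ℝ)) =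
      {f : C(Ω, ℝ) | ∀ F : Finset Ω, ∃ g ∈ Y, ∀ t ∈ F, f t = g t} := by
  ext f
  constructor
  · -- closure ⊆ RHS, via evaluation on finitely many points
    intro hf F
    let π : C(Ω, ℝ) →ₗ[ℝ] (F → ℝ) :=
      { toFun := fun g t => g (t : Ω)
        map_add' := fun g₁ g₂ => rfl
        map_smul' := fun c g => rfl }
    have hπc : Continuous π := continuous_pi fun t =>
      ContinuousEvalConst.continuous_eval_const (t : Ω)
    have himg : IsClosed ((Y.map π : Submodule ℝ (F → ℝ)) : Set (F → ℝ)) :=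
      Submodule.closed_of_finiteDimensional _
    have : π f ∈ closure ((Y.map π : Submodule ℝ (F → ℝ)) : Set (F → ℝ)) := by
      rw [Submodule.map_coe]
      exact image_closure_subset_closure_image hπc ⟨f, hf, rfl⟩
    rw [himg.closure_eq] at this
    obtain ⟨g, hgY, hgf⟩ := this
    refine ⟨g, hgY, fun t ht => ?_⟩
    have := congrFun hgf ⟨t, ht⟩
    exact this.symm
  · -- RHS ⊆ closure, via uniform approximation on compacts
    intro hf
    have hb : (𝓤 C(Ω, ℝ)).HasBasis _ _ :=
      (Metric.uniformity_basis_dist (α := ℝ)).compactConvergenceUniformity (α := Ω)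
    rw [mem_closure_iff_nhds_basis (nhds_basis_uniformity' hb)]
    rintro ⟨K, ε⟩ ⟨hK, hε⟩
    haveI : CompactSpace K := isCompact_iff_compactSpace.mp hK
    let L : Set C(K, ℝ) := (fun g : C(Ω, ℝ) => g.restrict K) '' (Y : Set C(Ω, ℝ))
    have inf_mem' : ∀ g₁ ∈ Y, ∀ g₂ ∈ Y, g₁ ⊓ g₂ ∈ Y := by
      intro g₁ h₁ g₂ h₂
      have : g₁ ⊓ g₂ = -((-g₁) ⊔ (-g₂)) := by
        ext x; simp [max_neg_neg]
      rw [this]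
      exact Y.neg_mem (hlat _ (Y.neg_mem h₁) _ (Y.neg_mem h₂))
    have hL_inf : ∀ p ∈ L, ∀ q ∈ L, p ⊓ q ∈ L := by
      rintro p ⟨g₁, h₁, rfl⟩ q ⟨g₂, h₂, rfl⟩
      exact ⟨g₁ ⊓ g₂, inf_mem' _ h₁ _ h₂, rfl⟩
    have hL_sup : ∀ p ∈ L, ∀ q ∈ L, p ⊔ q ∈ L := by
      rintro p ⟨g₁, h₁, rfl⟩ q ⟨g₂, h₂, rfl⟩
      exact ⟨g₁ ⊔ g₂, hlat _ h₁ _ h₂, rfl⟩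
    classical
    have sep : ∀ x y : K, ∃ p ∈ L, p x = f.restrict K x ∧ p y = f.restrict K y := by
      intro x y
      obtain ⟨g, hgY, hgf⟩ := hf {(x : Ω), (y : Ω)}
      exact ⟨g.restrict K, ⟨g, hgY, rfl⟩,
        (hgf _ (by simp)).symm, (hgf _ (by simp)).symm⟩
    obtain ⟨p, ⟨g, hgY, rfl⟩, hdist⟩ :=
      lattice_approx L ⟨(0 : C(Ω, ℝ)).restrict K, 0, Y.zero_mem, rfl⟩
        hL_inf hL_sup (f.restrict K) sep hε
    refine ⟨g, hgY, ?_⟩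
    intro x hx
    have := (ContinuousMap.dist_lt_iff hε).mp hdist ⟨x, hx⟩
    simpa [Real.dist_eq] using this
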